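/- Let T be a tree of height ω₁. If T admits a nice successor-partition, then ◊_T holds. -/

import Mathlib

open Set

/-- The first uncountable ordinal `ω₁`. -/
noncomputable def omega1 : Ordinal := Ordinal.omega 1

section TreeDefs

variable {T : Type*} [PartialOrder T]

/-- In a tree, the set of strict predecessors of any node is linearly ordered. -/
def PredsChain (T : Type*) [PartialOrder T] : Prop :=
  ∀ t : T, IsChain (· ≤ ·) {s : T | s < t}

/-- `ht` is *the* height function of the tree: it is strictly monotone on comparable pairs and
the heights of the strict predecessors of `t` are exactly the ordinals below `ht t`; together
with `PredsChain` this says that the set `t↓` of strict predecessors of `t` is well-ordered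
with order type `ht t`. -/
def IsHeightFun (ht : T → Ordinal) : Prop :=
  (∀ s t : T, s < t → ht s < ht t) ∧
  ∀ t : T, ∀ o : Ordinal, o < ht t → ∃ s : T, s < t ∧ ht s = o

/-- The tree has height `ω₁`: every node has height `< ω₁` and every countable ordinal is the
height of some node. -/
def HeightOmega1 (ht : T → Ordinal) : Prop :=
  (∀ t : T, ht t < omega1) ∧ ∀ o : Ordinal, o < omega1 → ∃ t : T, ht t = o

/-- All levels of the tree are countable. -/
def CountableLevels (ht : T → Ordinal) : Prop :=
  ∀ o : Ordinal, {t : T | ht t = o}.Countable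

/-- A tree of height `ω₁` is well-pruned if every node has successors in all later levels. -/
def WellPruned (ht : T → Ordinal) : Prop :=
  ∀ o o' : Ordinal, o < o' → o' < omega1 →
    ∀ s : T, ht s = o → ∃ t : T, s < t ∧ ht t = o'

/-- A special subset of a tree: a union of countably many antichains. -/
def IsSpecialSet (U : Set T) : Prop :=
  ∃ A : ℕ → Set T, (∀ n : ℕ, IsAntichain (· ≤ ·) (A n)) ∧ U ⊆ ⋃ n, A n

/-- Membership in the ideal `NS^T`: there is a regressive map on `B` all of whose fibers
are special. -/
def InNS [OrderBot T] (B : Set T) : Prop :=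
  ∃ f : T → T, (∀ t ∈ B, t ≠ ⊥ → f t < t) ∧
    ∀ t : T, IsSpecialSet {s : T | s ∈ B ∧ f s = t}

/-- The diamond principle `◊_T` for a tree `T`. -/
def DiamondTree (T : Type*) [PartialOrder T] [OrderBot T] : Prop :=
  ∃ D : T → Set T, (∀ t : T, D t ⊆ Set.Iio t) ∧
    ∀ X : Set T, ¬ InNS {t : T | X ∩ Set.Iio t = D t}

end TreeDefs

/-- Club subsets of `ω₁`: closed and unbounded in `ω₁`. -/
def IsClubIn (C : Set Ordinal) : Prop :=
  C ⊆ Set.Iio omega1 ∧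
  (∀ o : Ordinal, o < omega1 → ∃ b ∈ C, o < b) ∧
  ∀ o : Ordinal, o < omega1 → (C ∩ Set.Iio o).Nonempty →
    IsLUB (C ∩ Set.Iio o) o → o ∈ C

/-- Stationary subsets of `ω₁`: sets meeting every club. -/
def IsStationaryIn (S : Set Ordinal) : Prop :=
  ∀ C : Set Ordinal, IsClubIn C → (S ∩ C).Nonempty

/-- The diamond principle `◊(S)` for `S ⊆ ω₁`;  `◊` is `DiamondOn (Set.Iio omega1)`. -/
def DiamondOn (S : Set Ordinal) : Prop :=
  ∃ D : Ordinal → Set Ordinal, (∀ o ∈ S, D o ⊆ Set.Iio o) ∧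
    ∀ X : Set Ordinal, X ⊆ Set.Iio omega1 →
      IsStationaryIn {o ∈ S | X ∩ Set.Iio o = D o}

section SuccPartition

variable {T : Type*} [PartialOrder T]

/-- The set of immediate successors of `t`: nodes above `t` of height `ht t + 1`. -/
def TreeSucc (ht : T → Ordinal) (t : T) : Set T :=
  {s : T | t < s ∧ ht s = ht t + 1}

/-- A successor-partition: a partition of the immediate successors of each node into two
disjoint (possibly empty) pieces. -/
def IsSuccPartition (ht : T → Ordinal) (Q : T → Bool → Set T) : Prop :=
  ∀ t : T, Q t false ∪ Q t true = TreeSucc ht t ∧ Q t false ∩ Q t true = ∅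

/-- `W` is the subtree `T(Q, f)` determined by the successor-partition `Q` and `f : T → 2`:
it is downward closed, contains the root, the immediate successors in `W` of any `t ∈ W` are
exactly `Q t (f t)`, and a node of limit height belongs to `W` whenever all of its strict
predecessors do. -/
def IsInducedSubtree [OrderBot T] (ht : T → Ordinal) (Q : T → Bool → Set T)
    (f : T → Bool) (W : Set T) : Prop :=
  (∀ s t : T, s ≤ t → t ∈ W → s ∈ W) ∧
  (⊥ : T) ∈ W ∧
  (∀ t ∈ W, TreeSucc ht t ∩ W = Q t (f t)) ∧
  ∀ t : T, Order.IsSuccLimit (ht t) → (∀ s : T, s < t → s ∈ W) → t ∈ W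

end SuccPartition

section AuxSpecial

variable {T : Type*} [PartialOrder T]

lemma specialSubset {U V : Set T} (h : IsSpecialSet V) (hUV : U ⊆ V) : IsSpecialSet U := by
  obtain ⟨A, hA, hV⟩ := h
  exact ⟨A, hA, hUV.trans hV⟩

lemma specialSingleton (a : T) : IsSpecialSet ({a} : Set T) := by
  refine ⟨fun _ => {a}, fun n x hx y hy hxy => ?_, by simp⟩
  simp only [mem_singleton_iff] at hx hy
  exact absurd (hx.trans hy.symm) hxy

lemma specialIUnion {U : ℕ → Set T} (h : ∀ n, IsSpecialSet (U n)) :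
    IsSpecialSet (⋃ n, U n) := by
  classical
  choose A hA hU using h
  refine ⟨fun k => A (Nat.unpair k).1 (Nat.unpair k).2, fun k => hA _ _, ?_⟩
  rintro t ht
  obtain ⟨n, htn⟩ := mem_iUnion.1 ht
  obtain ⟨m, htm⟩ := mem_iUnion.1 (hU n htn)
  exact mem_iUnion.2 ⟨Nat.pair n m, by simpa [Nat.unpair_pair] using htm⟩

lemma specialUnion {U V : Set T} (hU : IsSpecialSet U) (hV : IsSpecialSet V) :
    IsSpecialSet (U ∪ V) := by
  classical
  have h : ∀ n : ℕ, IsSpecialSet (if n = 0 then U else V) := by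
    intro n; split <;> assumption
  refine specialSubset (specialIUnion h) ?_
  rintro t (htU | htV)
  · exact mem_iUnion.2 ⟨0, by simpa using htU⟩
  · exact mem_iUnion.2 ⟨1, by simpa using htV⟩

lemma specialBiUnionAntichain (hchain : PredsChain T) {A : Set T}
    (hA : IsAntichain (· ≤ ·) A) {S : T → Set T}
    (hS : ∀ a ∈ A, IsSpecialSet (S a)) (hcone : ∀ a ∈ A, S a ⊆ {t | a < t}) :
    IsSpecialSet (⋃ a ∈ A, S a) := by
  classical
  have hch : ∀ a, ∃ F : ℕ → Set T, (∀ n, IsAntichain (· ≤ ·) (F n)) ∧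
      (a ∈ A → S a ⊆ ⋃ n, F n) := by
    intro a
    by_cases ha : a ∈ A
    · obtain ⟨F, h1, h2⟩ := hS a ha; exact ⟨F, h1, fun _ => h2⟩
    · exact ⟨fun _ => ∅, fun n x hx => absurd hx (notMem_empty x),
        fun h => absurd h ha⟩
  choose F hFa hFc using hch
  refine ⟨fun n => ⋃ a ∈ A, (F a n ∩ {t | a < t}), fun n => ?_, ?_⟩
  · rintro t htm u hum htu hle
    obtain ⟨a, ha, hta, hat⟩ := by
      simpa only [mem_iUnion, mem_inter_iff, exists_prop, mem_setOf_eq] using htm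
    obtain ⟨b, hb, hub, hbu⟩ := by
      simpa only [mem_iUnion, mem_inter_iff, exists_prop, mem_setOf_eq] using hum
    rcases eq_or_ne a b with rfl | hab
    · exact hFa a n hta hub htu hle
    · have hat' : a < u := lt_of_lt_of_le hat hle
      rcases hchain u hat' hbu hab with h | h
      · exact hA ha hb hab h
      · exact hA hb ha hab.symm h
  · rintro t htm
    obtain ⟨a, ha, hta⟩ := mem_iUnion₂.1 htm
    obtain ⟨n, htn⟩ := mem_iUnion.1 (hFc a ha hta)
    exact mem_iUnion.2 ⟨n, mem_iUnion₂.2 ⟨a, ha, htn, hcone a ha hta⟩⟩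

lemma specialBiUnion (hchain : PredsChain T) {I : Set T} (hI : IsSpecialSet I)
    {S : T → Set T} (hS : ∀ a ∈ I, IsSpecialSet (S a))
    (hcone : ∀ a ∈ I, S a ⊆ {t | a < t}) :
    IsSpecialSet (⋃ a ∈ I, S a) := by
  obtain ⟨A, hA, hIc⟩ := hI
  have hsub : (⋃ a ∈ I, S a) ⊆ ⋃ n, ⋃ a ∈ (A n ∩ I), S a := by
    rintro t htm
    obtain ⟨a, ha, hta⟩ := mem_iUnion₂.1 htm
    obtain ⟨n, han⟩ := mem_iUnion.1 (hIc ha)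
    exact mem_iUnion.2 ⟨n, mem_iUnion₂.2 ⟨a, ⟨han, ha⟩, hta⟩⟩
  refine specialSubset (specialIUnion fun n => ?_) hsub
  exact specialBiUnionAntichain hchain ((hA n).subset inter_subset_left)
    (fun a ha => hS a ha.2) (fun a ha => hcone a ha.2)

lemma pressingDown [OrderBot T] (hchain : PredsChain T) {ht : T → Ordinal}
    (hmono : ∀ s t : T, s < t → ht s < ht t) {B : Set T}
    (hdc : ∀ s t : T, s ≤ t → t ∈ B → s ∈ B) {g : T → T}
    (hreg : ∀ t ∈ B, t ≠ ⊥ → g t < t)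
    (hfib : ∀ t : T, IsSpecialSet {s : T | s ∈ B ∧ g s = t}) :
    IsSpecialSet B := by
  have hBg : ∀ t ∈ B, t ≠ ⊥ → g t ∈ B := fun t htB hne => hdc _ _ (hreg t htB hne).le htB
  have hreach : ∀ o : Ordinal, ∀ t ∈ B, ht t = o → ∃ n : ℕ, g^[n] t = ⊥ := by
    intro o
    induction o using Ordinal.induction with
    | _ o IH =>
      intro t htB hto
      rcases eq_or_ne t ⊥ with rfl | hne
      · exact ⟨0, rfl⟩
      · obtain ⟨n, hn⟩ := IH (ht (g t)) (hto ▸ hmono _ _ (hreg t htB hne)) (g t)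
          (hBg t htB hne) rfl
        exact ⟨n + 1, by rwa [Function.iterate_succ_apply]⟩
  have hC : ∀ n : ℕ, IsSpecialSet {t | t ∈ B ∧ g^[n] t = ⊥} := by
    intro n
    induction n with
    | zero =>
      refine specialSubset (specialSingleton (⊥ : T)) ?_
      rintro t ⟨_, h⟩
      simpa using h
    | succ n IHn =>
      have hsub : {t | t ∈ B ∧ g^[n+1] t = ⊥} ⊆
          {(⊥ : T)} ∪ ⋃ s ∈ {t | t ∈ B ∧ g^[n] t = ⊥},
            ({u : T | u ∈ B ∧ g u = s} ∩ {u | s < u}) := by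
        rintro t ⟨htB, hit⟩
        rcases eq_or_ne t ⊥ with rfl | hne
        · exact Or.inl rfl
        · refine Or.inr ?_
          rw [Function.iterate_succ_apply] at hit
          exact mem_iUnion₂.2 ⟨g t, ⟨hBg t htB hne, hit⟩, ⟨htB, rfl⟩, hreg t htB hne⟩
      refine specialSubset (specialUnion (specialSingleton _) ?_) hsub
      exact specialBiUnion hchain IHn
        (fun s _ => specialSubset (hfib s) inter_subset_left)
        (fun s _ => inter_subset_right)
  have hcover : B ⊆ ⋃ n : ℕ, {t | t ∈ B ∧ g^[n] t = ⊥} := by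
    intro t htB
    obtain ⟨n, hn⟩ := hreach (ht t) t htB rfl
    exact mem_iUnion.2 ⟨n, htB, hn⟩
  exact specialSubset (specialIUnion hC) hcover

end AuxSpecial

/-- Let `T` be a tree of height `ω₁`. If `T` admits a nice
successor-partition (one all of whose induced subtrees `T(Q, f)` are nonspecial),
then `◊_T` holds. -/
theorem stmt10 {T : Type*} [PartialOrder T] [OrderBot T]
    (hchain : PredsChain T) (ht : T → Ordinal)
    (hht : IsHeightFun ht) (hΩ : HeightOmega1 ht)
    (hQnice : ∃ Q : T → Bool → Set T, IsSuccPartition ht Q ∧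
      ∀ f : T → Bool, ∀ W : Set T, IsInducedSubtree ht Q f W → ¬ IsSpecialSet W) :
    DiamondTree T := by
  classical
  obtain ⟨Q, hpart, hnice⟩ := hQnice
  -- comparability of predecessors, uniqueness of nodes of given height below a node
  have hlt_of_ht : ∀ t s v : T, s < t → v < t → ht s < ht v → s < v := by
    intro t s v hst hvt hh
    have hne : s ≠ v := fun h => absurd hh (h ▸ lt_irrefl _)
    rcases hchain t hst hvt hne with h | h
    · exact lt_of_le_of_ne h hne
    · exfalso
      rcases lt_or_eq_of_le h with h' | h'
      · exact absurd (hht.1 _ _ h') (not_lt.2 hh.le)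
      · exact hne h'.symm
  have huniq : ∀ t v v' : T, v ≤ t → v' ≤ t → ht v = ht v' → v = v' := by
    intro t v v' hv hv' hh
    rcases lt_or_eq_of_le hv with hv | rfl
    · rcases lt_or_eq_of_le hv' with hv' | rfl
      · by_contra hne
        rcases hchain t hv hv' hne with h | h
        · exact absurd hh (ne_of_lt (hht.1 _ _ (lt_of_le_of_ne h hne)))
        · exact absurd hh (ne_of_gt (hht.1 _ _ (lt_of_le_of_ne h (Ne.symm hne))))
      · exact absurd hh (ne_of_lt (hht.1 _ _ hv))
    · rcases lt_or_eq_of_le hv' with hv' | rfl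
      · exact absurd hh (ne_of_gt (hht.1 _ _ hv'))
      · rfl
  have hself : ∀ s : T, ht s < ht s + 1 := by
    intro s
    rw [Ordinal.add_one_eq_succ]
    exact Order.lt_succ _
  -- existence of the immediate successor of s below t
  have hex : ∀ s t : T, s < t → ∃ v, s < v ∧ v ≤ t ∧ ht v = ht s + 1 := by
    intro s t hst
    have h1 : ht s + 1 ≤ ht t := by
      rw [Ordinal.add_one_eq_succ]
      exact Order.succ_le_of_lt (hht.1 _ _ hst)
    rcases lt_or_eq_of_le h1 with h1 | h1
    · obtain ⟨w, hwt, hhw⟩ := hht.2 t _ h1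
      exact ⟨w, hlt_of_ht t s w hst hwt (hhw ▸ hself s), hwt.le, hhw⟩
    · exact ⟨t, hst, le_rfl, h1.symm⟩
  set P : T → T → Prop := fun s t => ∃ v, s < v ∧ v ≤ t ∧ ht v = ht s + 1 ∧ v ∈ Q s true
    with hPdef
  have hP : ∀ s u t : T, s < u → u ≤ t → (P s t ↔ P s u) := by
    intro s u t hsu hut
    constructor
    · rintro ⟨v, hsv, hvt, hhv, hvQ⟩
      obtain ⟨w, hsw, hwu, hhw⟩ := hex s u hsu
      have hvw : v = w := huniq t v w hvt (hwu.trans hut) (hhv.trans hhw.symm)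
      exact ⟨w, hsw, hwu, hhw, hvw ▸ hvQ⟩
    · rintro ⟨v, hsv, hvu, hhv, hvQ⟩
      exact ⟨v, hsv, hvu.trans hut, hhv, hvQ⟩
  have hPtu : ∀ t u : T, t < u → ht u = ht t + 1 → (P t u ↔ u ∈ Q t true) := by
    intro t u htu hhu
    constructor
    · rintro ⟨v, htv, hvu, hhv, hvQ⟩
      have hvu' : v = u := huniq u v u hvu le_rfl (by rw [hhv, hhu])
      rwa [hvu'] at hvQ
    · intro h
      exact ⟨u, htu, le_rfl, hhu, h⟩
  refine ⟨fun t => {s | s < t ∧ P s t}, fun t s hs => hs.1, ?_⟩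
  intro X hInNS
  obtain ⟨g, hreg, hfib⟩ := hInNS
  set B := {t : T | X ∩ Set.Iio t = {s | s < t ∧ P s t}} with hBdef
  have hBmem : ∀ t : T, t ∈ B ↔ ∀ s, s < t → (s ∈ X ↔ P s t) := by
    intro t
    show X ∩ Iio t = {s | s < t ∧ P s t} ↔ _
    rw [Set.ext_iff]
    constructor
    · intro h s hst
      have hs := h s
      simp only [mem_inter_iff, mem_Iio, mem_setOf_eq] at hs
      constructor
      · intro hx; exact (hs.1 ⟨hx, hst⟩).2
      · intro hp; exact (hs.2 ⟨hst, hp⟩).1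
    · intro h s
      simp only [mem_inter_iff, mem_Iio, mem_setOf_eq]
      constructor
      · rintro ⟨hx, hst⟩; exact ⟨hst, (h s hst).1 hx⟩
      · rintro ⟨hst, hp⟩; exact ⟨(h s hst).2 hp, hst⟩
  set f : T → Bool := fun s => if s ∈ X then true else false with hfdef
  have hftrue : ∀ s : T, f s = true ↔ s ∈ X := by
    intro s
    by_cases hx : s ∈ X <;> simp [hfdef, hx]
  -- B is downward closed
  have hBdc : ∀ s t : T, s ≤ t → t ∈ B → s ∈ B := by
    intro s t hst htB
    rcases lt_or_eq_of_le hst with hlt | rfl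
    · rw [hBmem s]
      intro u hus
      exact ((hBmem t).1 htB u (hus.trans hlt)).trans (hP u s t hus hlt.le)
    · exact htB
  -- root is in B
  have hBbot : (⊥ : T) ∈ B := by
    rw [hBmem ⊥]
    intro s hs
    exact absurd hs (not_lt_bot)
  -- successor condition
  have hsucc : ∀ t ∈ B, TreeSucc ht t ∩ B = Q t (f t) := by
    intro t htB
    ext u
    simp only [mem_inter_iff, TreeSucc, mem_setOf_eq]
    constructor
    · rintro ⟨⟨htu, hhu⟩, huB⟩
      have hXiff : t ∈ X ↔ P t u := (hBmem u).1 huB t htu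
      by_cases hx : t ∈ X
      · have hft : f t = true := (hftrue t).2 hx
        rw [hft]
        exact (hPtu t u htu hhu).1 (hXiff.1 hx)
      · have hft : f t = false := by
          rcases Bool.eq_false_or_eq_true (f t) with h | h
          · exact absurd ((hftrue t).1 h) hx
          · exact h
        rw [hft]
        have hnotQ : u ∉ Q t true := fun h => hx (hXiff.2 ((hPtu t u htu hhu).2 h))
        have hmem : u ∈ Q t false ∪ Q t true := by
          rw [(hpart t).1]
          exact ⟨htu, hhu⟩
        rcases hmem with h | h
        · exact h
        · exact absurd h hnotQ
    · intro huQ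
      have huSucc : u ∈ TreeSucc ht t := by
        rw [← (hpart t).1]
        rcases Bool.eq_false_or_eq_true (f t) with h | h
        · rw [h] at huQ; exact Or.inr huQ
        · rw [h] at huQ; exact Or.inl huQ
      obtain ⟨htu, hhu⟩ := huSucc
      refine ⟨⟨htu, hhu⟩, ?_⟩
      rw [hBmem u]
      intro s hsu
      have hcomp : s < t ∨ s = t := by
        rcases eq_or_ne s t with rfl | hne
        · exact Or.inr rfl
        · rcases hchain u hsu htu hne with h | h
          · exact Or.inl (lt_of_le_of_ne h hne)
          · exfalso
            have h1 : ht t < ht s := hht.1 _ _ (lt_of_le_of_ne h hne.symm)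
            have h2 : ht s < ht t + 1 := hhu ▸ hht.1 _ _ hsu
            rw [Ordinal.add_one_eq_succ, Order.lt_succ_iff] at h2
            exact absurd h1 (not_lt.2 h2)
      rcases hcomp with hst | rfl
      · rw [hP s t u hst htu.le]
        exact (hBmem t).1 htB s hst
      · rw [hPtu s u htu hhu]
        by_cases hx : s ∈ X
        · have hft : f s = true := (hftrue s).2 hx
          rw [hft] at huQ
          exact ⟨fun _ => huQ, fun _ => hx⟩
        · have hft : f s = false := by
            rcases Bool.eq_false_or_eq_true (f s) with h | h
            · exact absurd ((hftrue s).1 h) hx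
            · exact h
          rw [hft] at huQ
          have hnotQ : u ∉ Q s true := by
            intro h
            have : u ∈ Q s false ∩ Q s true := ⟨huQ, h⟩
            rw [(hpart s).2] at this
            exact notMem_empty u this
          exact ⟨fun h => absurd h hx, fun h => absurd h hnotQ⟩
  -- limit condition
  have hlim : ∀ t : T, Order.IsSuccLimit (ht t) → (∀ s : T, s < t → s ∈ B) → t ∈ B := by
    intro t hl hpred
    rw [hBmem t]
    intro s hst
    have h1 : ht s + 1 < ht t := by
      rw [Ordinal.add_one_eq_succ]
      exact hl.succ_lt (hht.1 _ _ hst)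
    obtain ⟨v, hvt, hhv⟩ := hht.2 t _ h1
    have hsv : s < v := hlt_of_ht t s v hst hvt (hhv ▸ hself s)
    rw [hP s v t hsv hvt.le]
    exact (hBmem v).1 (hpred v hvt) s hsv
  have hInd : IsInducedSubtree ht Q f B := ⟨hBdc, hBbot, hsucc, hlim⟩
  exact hnice f B hInd
    (pressingDown hchain hht.1 hBdc (fun t htB hne => hreg t htB hne) hfib)
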